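/- Let u : ℝ^m → [0,1] be a fuzzy set, t ∈ ℝ^m, r > 0, e ∈ S^{m−1}, and α ∈ (0,1). Suppose there exists α₀ > α such that [u]_λ ∩ closedBall(t,r) ≠ ∅ for all λ ∈ [0, α₀], and set ξ := lim_{β→α−} S_{u,t,r}(e, β) − lim_{β→α+} S_{u,t,r}(e, β) and assume ξ > 0. Then there exists δ > 0 such that for all f ∈ S^{m−1} with ‖f − e‖ < δ, one has lim_{β→α−} S_{u,t,r}(f, β) − lim_{β→α+} S_{u,t,r}(f, β) > ξ/2; in particular α ∈ D_{u,t,r,f} for all such f. -/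

import Mathlib

open Set Metric

/-- `S_{u,t,r}(e, α)`: the sup of `⟨e, x - t⟩` over `[u]_α ∩ closedBall t r`,
with value `⊥ = -∞` when this set is empty (`sSup ∅ = ⊥` in `EReal`). -/
noncomputable def Sfun {m : ℕ} (u : EuclideanSpace ℝ (Fin m) → ℝ)
    (t : EuclideanSpace ℝ (Fin m)) (r : ℝ)
    (e : EuclideanSpace ℝ (Fin m)) (α : ℝ) : EReal :=
  sSup ((fun x => ((inner ℝ e (x - t) : ℝ) : EReal)) ''
    ({x | α ≤ u x} ∩ closedBall t r))

/-- The set `D_{u,t,r,e}` of discontinuous points `α ∈ (0,1)` of `S_{u,t,r}(e, ·)`: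
(i) `S_{u,t,r}(e, α) ∈ ℝ` and (ii) either `S_{u,t,r}(e, β) = -∞` for all `β > α`, or
`-∞ < lim_{β→α+} S = ⨆_{β > α} S < lim_{β→α-} S = ⨅_{β < α} S`. -/
noncomputable def Dset {m : ℕ} (u : EuclideanSpace ℝ (Fin m) → ℝ)
    (t : EuclideanSpace ℝ (Fin m)) (r : ℝ)
    (e : EuclideanSpace ℝ (Fin m)) : Set ℝ :=
  {α | α ∈ Ioo (0:ℝ) 1 ∧ Sfun u t r e α ≠ ⊥ ∧ Sfun u t r e α ≠ ⊤ ∧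
    ((∀ β ∈ Ioc α 1, Sfun u t r e β = ⊥) ∨
      ((⊥ < ⨆ β ∈ Ioc α 1, Sfun u t r e β) ∧
        ((⨆ β ∈ Ioc α 1, Sfun u t r e β) < ⨅ β ∈ Ico (0:ℝ) α, Sfun u t r e β)))}

/-- If `[u]_λ ∩ closedBall(t,r) ≠ ∅` for all `λ ∈ [0, α₀]` with `α₀ > α`, and
`ξ := lim_{β→α-} S_{u,t,r}(e,β) - lim_{β→α+} S_{u,t,r}(e,β) > 0`, then there is `δ > 0`
such that for all `f ∈ S^{m-1}` with `‖f - e‖ < δ`, the corresponding jump of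
`S_{u,t,r}(f, ·)` at `α` exceeds `ξ/2`; in particular `α ∈ D_{u,t,r,f}`. -/
lemma my_inner_bound {m : ℕ} (f x t : EuclideanSpace ℝ (Fin m)) (hf : ‖f‖ = 1)
    {r : ℝ} (hx : x ∈ closedBall t r) : |(inner ℝ f (x - t) : ℝ)| ≤ r := by
  calc |(inner ℝ f (x - t) : ℝ)| ≤ ‖f‖ * ‖x - t‖ := abs_real_inner_le_norm f (x - t)
    _ = ‖x - t‖ := by rw [hf, one_mul]
    _ ≤ r := by rwa [mem_closedBall, dist_eq_norm] at hx

lemma my_Sfun_le {m : ℕ} (u : EuclideanSpace ℝ (Fin m) → ℝ)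
    (t : EuclideanSpace ℝ (Fin m)) (r : ℝ) (f : EuclideanSpace ℝ (Fin m))
    (hf : ‖f‖ = 1) (β : ℝ) : Sfun u t r f β ≤ (r : EReal) := by
  apply sSup_le
  rintro _ ⟨x, ⟨hx1, hx2⟩, rfl⟩
  show ((inner ℝ f (x - t) : ℝ) : EReal) ≤ (r : EReal)
  exact_mod_cast le_trans (le_abs_self _) (my_inner_bound f x t hf hx2)

lemma my_le_Sfun {m : ℕ} (u : EuclideanSpace ℝ (Fin m) → ℝ)
    (t : EuclideanSpace ℝ (Fin m)) (r : ℝ) (f : EuclideanSpace ℝ (Fin m))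
    (hf : ‖f‖ = 1) (β : ℝ) (hne : ({x | β ≤ u x} ∩ closedBall t r).Nonempty) :
    ((-r : ℝ) : EReal) ≤ Sfun u t r f β := by
  obtain ⟨x, hx⟩ := hne
  refine le_trans ?_ (le_sSup ⟨x, hx, rfl⟩)
  show ((-r : ℝ) : EReal) ≤ ((inner ℝ f (x - t) : ℝ) : EReal)
  exact_mod_cast (abs_le.mp (my_inner_bound f x t hf hx.2)).1

lemma my_Sfun_lip {m : ℕ} (u : EuclideanSpace ℝ (Fin m) → ℝ)
    (t : EuclideanSpace ℝ (Fin m)) {r : ℝ} (hr : 0 < r)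
    (f e : EuclideanSpace ℝ (Fin m)) (β : ℝ) :
    Sfun u t r f β ≤ Sfun u t r e β + ((‖f - e‖ * r : ℝ) : EReal) := by
  apply sSup_le
  rintro _ ⟨x, hx, rfl⟩
  have h2 : (inner ℝ (f - e) (x - t) : ℝ) ≤ ‖f - e‖ * ‖x - t‖ := real_inner_le_norm _ _
  have h3 : ‖x - t‖ ≤ r := by
    have := hx.2; rwa [mem_closedBall, dist_eq_norm] at this
  have h1 : (inner ℝ f (x - t) : ℝ) ≤ (inner ℝ e (x - t) : ℝ) + ‖f - e‖ * r := by
    have hsub : (inner ℝ (f - e) (x - t) : ℝ) = inner ℝ f (x - t) - inner ℝ e (x - t) :=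
      inner_sub_left _ _ _
    nlinarith [norm_nonneg (f - e)]
  calc ((inner ℝ f (x - t) : ℝ) : EReal)
      ≤ (((inner ℝ e (x - t) : ℝ) + ‖f - e‖ * r : ℝ) : EReal) := by exact_mod_cast h1
    _ = ((inner ℝ e (x - t) : ℝ) : EReal) + ((‖f - e‖ * r : ℝ) : EReal) := by
        rw [EReal.coe_add]
    _ ≤ Sfun u t r e β + ((‖f - e‖ * r : ℝ) : EReal) :=
        add_le_add_left (le_sSup (mem_image_of_mem (fun x => ((inner ℝ e (x - t) : ℝ) : EReal)) hx)) _

lemma my_ereal_between {r : ℝ} {a : EReal} (h1 : ((-r : ℝ) : EReal) ≤ a)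
    (h2 : a ≤ (r : EReal)) : ∃ s : ℝ, a = (s : EReal) ∧ -r ≤ s ∧ s ≤ r := by
  have hcond : a ≠ ⊤ ∧ a ≠ ⊥ :=
    ⟨(h2.trans_lt (EReal.coe_lt_top r)).ne, ((EReal.bot_lt_coe (-r)).trans_le h1).ne'⟩
  lift a to ℝ using hcond
  exact ⟨a, rfl, by exact_mod_cast h1, by exact_mod_cast h2⟩

theorem jump_stable {m : ℕ} (u : EuclideanSpace ℝ (Fin m) → ℝ)
    (hu : ∀ x, u x ∈ Icc (0:ℝ) 1)
    (t : EuclideanSpace ℝ (Fin m)) (r : ℝ) (hr : 0 < r)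
    (e : EuclideanSpace ℝ (Fin m)) (he : e ∈ sphere (0 : EuclideanSpace ℝ (Fin m)) 1)
    (α : ℝ) (hα : α ∈ Ioo (0:ℝ) 1)
    (α₀ : ℝ) (hα₀ : α < α₀)
    (hne : ∀ l ∈ Icc (0:ℝ) α₀, ({x | l ≤ u x} ∩ closedBall t r).Nonempty)
    (ξ : ℝ)
    (hξ : (⨅ β ∈ Ico (0:ℝ) α, Sfun u t r e β) - (⨆ β ∈ Ioc α 1, Sfun u t r e β)
      = ((ξ : ℝ) : EReal))
    (hξpos : 0 < ξ) :
    ∃ δ > 0, ∀ f ∈ sphere (0 : EuclideanSpace ℝ (Fin m)) 1, ‖f - e‖ < δ →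
      ((((ξ / 2 : ℝ)) : EReal) <
        (⨅ β ∈ Ico (0:ℝ) α, Sfun u t r f β) - (⨆ β ∈ Ioc α 1, Sfun u t r f β)) ∧
      α ∈ Dset u t r f := by
  have he1 : ‖e‖ = 1 := by simpa using he
  refine ⟨ξ / (4 * r), by positivity, ?_⟩
  intro f hfs hffe
  have hf1 : ‖f‖ = 1 := by simpa using hfs
  set c : ℝ := ‖f - e‖ * r with hcdef
  have hc0 : 0 ≤ c := mul_nonneg (norm_nonneg _) hr.le
  have hcξ : c < ξ / 4 := by
    have h := mul_lt_mul_of_pos_right hffe hr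
    have h2 : ξ / (4 * r) * r = ξ / 4 := by field_simp
    rw [h2] at h
    exact h
  set β₁ : ℝ := min α₀ 1 with hβ₁def
  have hβ₁ : β₁ ∈ Ioc α 1 := ⟨lt_min hα₀ hα.2, min_le_right _ _⟩
  have hβ₁' : β₁ ∈ Icc (0:ℝ) α₀ :=
    ⟨le_min (le_of_lt (hα.1.trans hα₀)) zero_le_one, min_le_left _ _⟩
  have hmem : ∀ β ∈ Ico (0:ℝ) α, β ∈ Icc (0:ℝ) α₀ :=
    fun β hβ => ⟨hβ.1, le_of_lt (hβ.2.trans hα₀)⟩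
  have hαmem : α ∈ Icc (0:ℝ) α₀ := ⟨hα.1.le, hα₀.le⟩
  have key : ∀ g : EuclideanSpace ℝ (Fin m), ‖g‖ = 1 →
      (∃ S : ℝ, (⨆ β ∈ Ioc α 1, Sfun u t r g β) = (S : EReal) ∧ -r ≤ S ∧ S ≤ r) ∧
      (∃ I : ℝ, (⨅ β ∈ Ico (0:ℝ) α, Sfun u t r g β) = (I : EReal) ∧ -r ≤ I ∧ I ≤ r) := by
    intro g hg
    constructor
    · apply my_ereal_between
      · exact le_trans (my_le_Sfun u t r g hg β₁ (hne β₁ hβ₁')) (le_iSup₂ (f := fun β _ => Sfun u t r g β) β₁ hβ₁)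
      · exact iSup₂_le fun β _ => my_Sfun_le u t r g hg β
    · apply my_ereal_between
      · exact le_iInf₂ fun β hβ => my_le_Sfun u t r g hg β (hne β (hmem β hβ))
      · exact le_trans (iInf₂_le 0 ⟨le_refl 0, hα.1⟩) (my_Sfun_le u t r g hg 0)
  obtain ⟨⟨Se, hSe, hSe1, hSe2⟩, ⟨Ie, hIe, hIe1, hIe2⟩⟩ := key e he1
  obtain ⟨⟨Sf, hSf, hSf1, hSf2⟩, ⟨If, hIf, hIf1, hIf2⟩⟩ := key f hf1
  have hξ' : Ie - Se = ξ := by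
    rw [hIe, hSe, ← EReal.coe_sub] at hξ
    exact_mod_cast hξ
  have hSup : Sf ≤ Se + c := by
    have h : (⨆ β ∈ Ioc α 1, Sfun u t r f β) ≤ ((Se + c : ℝ) : EReal) := by
      apply iSup₂_le
      intro β hβ
      calc Sfun u t r f β ≤ Sfun u t r e β + ((c : ℝ) : EReal) := my_Sfun_lip u t hr f e β
        _ ≤ ((Se : ℝ) : EReal) + ((c : ℝ) : EReal) :=
            add_le_add_left (le_trans (le_iSup₂ β hβ) (le_of_eq hSe)) _
        _ = ((Se + c : ℝ) : EReal) := (EReal.coe_add _ _).symm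
    rw [hSf] at h
    exact_mod_cast h
  have hInf : Ie - c ≤ If := by
    have h : ((Ie - c : ℝ) : EReal) ≤ ⨅ β ∈ Ico (0:ℝ) α, Sfun u t r f β := by
      apply le_iInf₂
      intro β hβ
      obtain ⟨s, hs, _, _⟩ := my_ereal_between
        (my_le_Sfun u t r f hf1 β (hne β (hmem β hβ))) (my_Sfun_le u t r f hf1 β)
      have h1 : ((Ie : ℝ) : EReal) ≤ Sfun u t r e β :=
        le_trans (le_of_eq hIe.symm) (iInf₂_le β hβ)
      have hlip2 : Sfun u t r e β ≤ Sfun u t r f β + ((c : ℝ) : EReal) := by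
        have h3 := my_Sfun_lip u t hr e f β
        rwa [norm_sub_rev] at h3
      have h2 : Sfun u t r e β ≤ ((s + c : ℝ) : EReal) := by
        rw [hs] at hlip2
        calc Sfun u t r e β ≤ ((s : ℝ) : EReal) + ((c : ℝ) : EReal) := hlip2
          _ = ((s + c : ℝ) : EReal) := (EReal.coe_add _ _).symm
      have h4 : Ie ≤ s + c := by exact_mod_cast h1.trans h2
      rw [hs]
      exact_mod_cast (by linarith : Ie - c ≤ s)
    rw [hIf] at h
    exact_mod_cast h
  have hjump : ξ / 2 < If - Sf := by linarith
  refine ⟨?_, ?_⟩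
  · rw [hIf, hSf, ← EReal.coe_sub]
    exact_mod_cast hjump
  · obtain ⟨sα, hsα, _, _⟩ := my_ereal_between
      (my_le_Sfun u t r f hf1 α (hne α hαmem)) (my_Sfun_le u t r f hf1 α)
    refine ⟨hα, by rw [hsα]; exact EReal.coe_ne_bot _,
      by rw [hsα]; exact EReal.coe_ne_top _, Or.inr ⟨?_, ?_⟩⟩
    · rw [hSf]
      exact EReal.bot_lt_coe _
    · rw [hSf, hIf]
      exact_mod_cast (by linarith : Sf < If)
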